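/- Let f : ℝⁿ → ℝ be L-smooth with lower bound f⋆, let t_k ∈ (0, √3/L) for k = 1,…,N, and let x^{k+1} = x^k - t_k∇f(x^k) with f(x¹) - f⋆ ≤ Δ. Then min_{1≤k≤N+1} ‖∇f(x^k)‖ ≤ ( 4Δ / ( Σ_{k=1}^N min(-L²t_k³ + 4t_k, -Lt_k² + 4t_k) + 2/L ) )^{1/2}. -/

import Mathlib

open RealInnerProductSpace

variable {n : ℕ}

-- sharp Taylor upper bound
theorem gd_taylor_upper (f : EuclideanSpace ℝ (Fin n) → ℝ) (L : ℝ) (hL : 0 < L)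
    (hf : Differentiable ℝ f)
    (hlip : ∀ x y, ‖gradient f x - gradient f y‖ ≤ L * ‖x - y‖)
    (x v : EuclideanSpace ℝ (Fin n)) :
    f (x + v) ≤ f x + ⟪gradient f x, v⟫ + L / 2 * ‖v‖ ^ 2 := by
  set φ : ℝ → ℝ := fun s => f (x + s • v) - s * ⟪gradient f x, v⟫ - L / 2 * s ^ 2 * ‖v‖ ^ 2 with hφ
  have hd : ∀ s : ℝ, HasDerivAt φ
      (⟪gradient f (x + s • v), v⟫ - ⟪gradient f x, v⟫ - L * s * ‖v‖ ^ 2) s := by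
    intro s
    have hline : HasDerivAt (fun s : ℝ => x + s • v) v s := by
      simpa using ((hasDerivAt_id s).smul_const v).const_add x
    have h1 : HasDerivAt (fun s : ℝ => f (x + s • v)) (⟪gradient f (x + s • v), v⟫) s := by
      have := ((hf (x + s • v)).hasGradientAt.hasFDerivAt).comp_hasDerivAt s hline
      simpa [InnerProductSpace.toDual_apply_apply, Function.comp_def] using this
    have h2 : HasDerivAt (fun s : ℝ => s * ⟪gradient f x, v⟫) (⟪gradient f x, v⟫) s := by
      simpa using (hasDerivAt_id s).mul_const (⟪gradient f x, v⟫)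
    have h3 : HasDerivAt (fun s : ℝ => L / 2 * s ^ 2 * ‖v‖ ^ 2) (L * s * ‖v‖ ^ 2) s := by
      have : HasDerivAt (fun s : ℝ => s ^ 2) (2 * s) s := by
        simpa using (hasDerivAt_pow 2 s)
      have := (this.const_mul (L / 2)).mul_const (‖v‖ ^ 2)
      exact this.congr_deriv (by ring)
    exact (h1.sub h2).sub h3
  have hanti : AntitoneOn φ (Set.Icc (0:ℝ) 1) := by
    apply antitoneOn_of_deriv_nonpos (convex_Icc 0 1)
    · exact (fun s _ => (hd s).differentiableAt.continuousAt.continuousWithinAt)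
    · intro s hs
      exact (hd s).differentiableAt.differentiableWithinAt
    · intro s hs
      rw [interior_Icc] at hs
      rw [(hd s).deriv]
      have hcs : ⟪gradient f (x + s • v) - gradient f x, v⟫
          ≤ ‖gradient f (x + s • v) - gradient f x‖ * ‖v‖ := real_inner_le_norm _ _
      have hlipuse : ‖gradient f (x + s • v) - gradient f x‖ ≤ L * (s * ‖v‖) := by
        have := hlip (x + s • v) x
        simpa [norm_smul, abs_of_nonneg (le_of_lt hs.1)] using this
      have : ⟪gradient f (x + s • v), v⟫ - ⟪gradient f x, v⟫ ≤ L * s * ‖v‖ ^ 2 := by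
        rw [← inner_sub_left]
        calc ⟪gradient f (x + s • v) - gradient f x, v⟫
            ≤ ‖gradient f (x + s • v) - gradient f x‖ * ‖v‖ := hcs
          _ ≤ L * (s * ‖v‖) * ‖v‖ := by
              apply mul_le_mul_of_nonneg_right hlipuse (norm_nonneg v)
          _ = L * s * ‖v‖ ^ 2 := by ring
      linarith
  have := hanti (Set.mem_Icc.2 ⟨le_refl 0, zero_le_one⟩) (Set.mem_Icc.2 ⟨zero_le_one, le_refl 1⟩)
      zero_le_one
  simp only [hφ, zero_smul, one_smul, add_zero, zero_mul, zero_pow, mul_zero, sub_zero,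
    one_mul, one_pow, mul_one] at this
  linarith


theorem gd_taylor_lower (f : EuclideanSpace ℝ (Fin n) → ℝ) (L : ℝ) (hL : 0 < L)
    (hf : Differentiable ℝ f)
    (hlip : ∀ x y, ‖gradient f x - gradient f y‖ ≤ L * ‖x - y‖)
    (x v : EuclideanSpace ℝ (Fin n)) :
    f x + ⟪gradient f x, v⟫ - L / 2 * ‖v‖ ^ 2 ≤ f (x + v) := by
  set φ : ℝ → ℝ := fun s => f (x + s • v) - s * ⟪gradient f x, v⟫ + L / 2 * s ^ 2 * ‖v‖ ^ 2 with hφ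
  have hd : ∀ s : ℝ, HasDerivAt φ
      (⟪gradient f (x + s • v), v⟫ - ⟪gradient f x, v⟫ + L * s * ‖v‖ ^ 2) s := by
    intro s
    have hline : HasDerivAt (fun s : ℝ => x + s • v) v s := by
      simpa using ((hasDerivAt_id s).smul_const v).const_add x
    have h1 : HasDerivAt (fun s : ℝ => f (x + s • v)) (⟪gradient f (x + s • v), v⟫) s := by
      have := ((hf (x + s • v)).hasGradientAt.hasFDerivAt).comp_hasDerivAt s hline
      simpa [InnerProductSpace.toDual_apply_apply, Function.comp_def] using this
    have h2 : HasDerivAt (fun s : ℝ => s * ⟪gradient f x, v⟫) (⟪gradient f x, v⟫) s := by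
      simpa using (hasDerivAt_id s).mul_const (⟪gradient f x, v⟫)
    have h3 : HasDerivAt (fun s : ℝ => L / 2 * s ^ 2 * ‖v‖ ^ 2) (L * s * ‖v‖ ^ 2) s := by
      have : HasDerivAt (fun s : ℝ => s ^ 2) (2 * s) s := by
        simpa using (hasDerivAt_pow 2 s)
      have := (this.const_mul (L / 2)).mul_const (‖v‖ ^ 2)
      exact this.congr_deriv (by ring)
    exact (h1.sub h2).add h3
  have hmono : MonotoneOn φ (Set.Icc (0:ℝ) 1) := by
    apply monotoneOn_of_deriv_nonneg (convex_Icc 0 1)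
    · exact (fun s _ => (hd s).differentiableAt.continuousAt.continuousWithinAt)
    · intro s hs
      exact (hd s).differentiableAt.differentiableWithinAt
    · intro s hs
      rw [interior_Icc] at hs
      rw [(hd s).deriv]
      have hcs : ⟪gradient f x - gradient f (x + s • v), v⟫
          ≤ ‖gradient f x - gradient f (x + s • v)‖ * ‖v‖ := real_inner_le_norm _ _
      have hlipuse : ‖gradient f x - gradient f (x + s • v)‖ ≤ L * (s * ‖v‖) := by
        have := hlip x (x + s • v)
        simpa [norm_smul, norm_sub_rev (x : EuclideanSpace ℝ (Fin n)),
          abs_of_nonneg (le_of_lt hs.1)] using this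
      have : ⟪gradient f x, v⟫ - ⟪gradient f (x + s • v), v⟫ ≤ L * s * ‖v‖ ^ 2 := by
        rw [← inner_sub_left]
        calc ⟪gradient f x - gradient f (x + s • v), v⟫
            ≤ ‖gradient f x - gradient f (x + s • v)‖ * ‖v‖ := hcs
          _ ≤ L * (s * ‖v‖) * ‖v‖ := by
              apply mul_le_mul_of_nonneg_right hlipuse (norm_nonneg v)
          _ = L * s * ‖v‖ ^ 2 := by ring
      linarith
  have := hmono (Set.mem_Icc.2 ⟨le_refl 0, zero_le_one⟩) (Set.mem_Icc.2 ⟨zero_le_one, le_refl 1⟩)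
      zero_le_one
  simp only [hφ, zero_smul, one_smul, add_zero, zero_mul, zero_pow, mul_zero, sub_zero,
    one_mul, one_pow, mul_one] at this
  linarith


theorem gd_step (f : EuclideanSpace ℝ (Fin n) → ℝ) (L : ℝ) (hL : 0 < L)
    (hf : Differentiable ℝ f)
    (hlip : ∀ x y, ‖gradient f x - gradient f y‖ ≤ L * ‖x - y‖)
    (x : EuclideanSpace ℝ (Fin n)) (t : ℝ) (ht0 : 0 < t) (ht3 : L ^ 2 * t ^ 2 ≤ 3) :
    min (-L ^ 2 * t ^ 3 + 4 * t) (-L * t ^ 2 + 4 * t) *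
        min (‖gradient f x‖ ^ 2) (‖gradient f (x - t • gradient f x)‖ ^ 2)
      ≤ 4 * (f x - f (x - t • gradient f x)) := by
  set g := gradient f x with hg
  set y := x - t • g with hy
  set h := gradient f y with hh
  set u := h - g with hu
  set D := ‖g‖ ^ 2 with hD
  set U := ‖u‖ ^ 2 with hUdef
  set P := ⟪g, u⟫ with hP
  have hDnn : 0 ≤ D := by positivity
  have hUnn : 0 ≤ U := by positivity
  -- h = g + u
  have hgu : h = g + u := by rw [hu]; abel
  have hH : ‖h‖ ^ 2 = D + 2 * P + U := by
    rw [hgu, norm_add_sq_real]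
  -- Lipschitz bound on u
  have hUb : U ≤ L ^ 2 * t ^ 2 * D := by
    have h1 : ‖u‖ ≤ L * (t * ‖g‖) := by
      have := hlip y x
      have hyx : y - x = -(t • g) := by rw [hy]; abel
      rw [hu, hh, hg] at *
      calc ‖gradient f y - gradient f x‖ ≤ L * ‖y - x‖ := hlip y x
        _ = L * (t * ‖g‖) := by
            rw [hyx, norm_neg, norm_smul, Real.norm_eq_abs, abs_of_pos ht0, hg]
    have := mul_self_le_mul_self (norm_nonneg u) h1
    calc U = ‖u‖ * ‖u‖ := by rw [hUdef]; ring
      _ ≤ (L * (t * ‖g‖)) * (L * (t * ‖g‖)) := this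
      _ = L ^ 2 * t ^ 2 * D := by rw [hD]; ring
  -- key inequality via midpoint trick
  set v₁ : EuclideanSpace ℝ (Fin n) := (-(t/2)) • g + (1/(2*L)) • u with hv₁
  set v₂ : EuclideanSpace ℝ (Fin n) := (t/2) • g + (1/(2*L)) • u with hv₂
  have hyw : y + v₂ = x + v₁ := by rw [hy, hv₁, hv₂]; module
  have h1 := gd_taylor_upper f L hL hf hlip x v₁
  have h2 := gd_taylor_lower f L hL hf hlip y v₂
  rw [hyw] at h2
  rw [← hg] at h1
  rw [← hh] at h2
  have hsq : ∀ (a b : ℝ) (p q : EuclideanSpace ℝ (Fin n)),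
      ‖a • p + b • q‖ ^ 2 = a^2 * ‖p‖^2 + 2*(a*b) * ⟪p, q⟫ + b^2 * ‖q‖^2 := by
    intro a b p q
    rw [norm_add_sq_real, norm_smul, norm_smul, real_inner_smul_left, real_inner_smul_right]
    simp [Real.norm_eq_abs, mul_pow, sq_abs]
    ring
  have e1 : ⟪g, v₁⟫ = -(t/2) * D + (1/(2*L)) * P := by
    rw [hv₁, inner_add_right, real_inner_smul_right, real_inner_smul_right,
      real_inner_self_eq_norm_sq, ← hD, ← hP]
  have e2 : ⟪h, v₂⟫ = (t/2) * D + (1/(2*L)) * P + (t/2) * P + (1/(2*L)) * U := by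
    have hug : (inner ℝ u g : ℝ) = P := real_inner_comm g u
    rw [hgu, hv₂, inner_add_left, inner_add_right, inner_add_right,
      real_inner_smul_right, real_inner_smul_right, real_inner_smul_right,
      real_inner_smul_right, real_inner_self_eq_norm_sq, real_inner_self_eq_norm_sq,
      hug, ← hD, ← hUdef, ← hP]
    ring
  have e3 : ‖v₁‖ ^ 2 = (t/2)^2 * D + 2*((-(t/2))*(1/(2*L))) * P + (1/(2*L))^2 * U := by
    rw [hv₁, hsq, ← hD, ← hUdef, ← hP]; ring
  have e4 : ‖v₂‖ ^ 2 = (t/2)^2 * D + 2*((t/2)*(1/(2*L))) * P + (1/(2*L))^2 * U := by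
    rw [hv₂, hsq, ← hD, ← hUdef, ← hP]
  -- combined: f y ≤ f x + ⟪g,v₁⟫ - ⟪h,v₂⟫ + L/2 * (‖v₁‖² + ‖v₂‖²)
  have comb : f y ≤ f x + (⟪g, v₁⟫ - ⟪h, v₂⟫ + L/2 * ‖v₁‖^2 + L/2 * ‖v₂‖^2) := by
    linarith [h1, h2]
  have hid : 4*L*(⟪g, v₁⟫ - ⟪h, v₂⟫ + L/2 * ‖v₁‖^2 + L/2 * ‖v₂‖^2)
      = -(4*L*t*D + 2*L*t*P - L^2*t^2*D + U) := by
    rw [e1, e2, e3, e4]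
    field_simp
    ring
  have K : 4*L*t*D + 2*L*t*P - L^2*t^2*D + U ≤ 4*L*(f x - f y) := by
    have hmul : 4*L*(f y - f x) ≤ 4*L*(⟪g, v₁⟫ - ⟪h, v₂⟫ + L/2 * ‖v₁‖^2 + L/2 * ‖v₂‖^2) := by
      apply mul_le_mul_of_nonneg_left (by linarith [comb]) (by positivity)
    rw [hid] at hmul
    linarith
  clear hsq e1 e2 e3 e4 comb hid h1 h2 hyw hv₁ hv₂
  clear v₁ v₂
  clear hlip hf hgu hu hh hP hUdef hD
  clear_value P U D u h y g
  rcases le_total (L*t) 1 with hb | hb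
  · have hcmp : -L * t ^ 2 + 4 * t ≤ -L ^ 2 * t ^ 3 + 4 * t := by
      have h0 : 0 < L*t^2 := by positivity
      have := mul_le_mul_of_nonneg_right hb (le_of_lt h0)
      nlinarith [this]
    rw [min_eq_right hcmp]
    rcases le_total (‖h‖^2) D with h2c | h2c
    · rw [min_eq_right h2c, hH]
      have hs : 2*P + U ≤ 0 := by rw [hH] at h2c; linarith
      have A1 : 0 ≤ U*(1 - L*t) := mul_nonneg hUnn (by linarith)
      have A2 : 0 ≤ (L*t)*((3 - L*t)*(-(2*P+U))) :=
        mul_nonneg (by positivity) (mul_nonneg (by linarith) (by linarith))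
      have hgoalL : L * ((-L * t ^ 2 + 4 * t) * (D + 2 * P + U)) ≤ L * (4*(f x - f y)) := by
        linarith [K, A1, A2]
      exact le_of_mul_le_mul_left hgoalL hL
    · rw [min_eq_left h2c]
      have hs : 0 ≤ 2*P + U := by rw [hH] at h2c; linarith
      have B1 : 0 ≤ (L*t)*(2*P+U) := mul_nonneg (by positivity) hs
      have B2 : 0 ≤ U*(1 - L*t) := mul_nonneg hUnn (by linarith)
      have hgoalL : L * ((-L * t ^ 2 + 4 * t) * D) ≤ L * (4*(f x - f y)) := by
        linarith [K, B1, B2]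
      exact le_of_mul_le_mul_left hgoalL hL
  · have hcmp : -L ^ 2 * t ^ 3 + 4 * t ≤ -L * t ^ 2 + 4 * t := by
      have h0 : 0 < L*t^2 := by positivity
      have := mul_le_mul_of_nonneg_right hb (le_of_lt h0)
      nlinarith [this]
    rw [min_eq_left hcmp]
    rcases le_total (‖h‖^2) D with h2c | h2c
    · rw [min_eq_right h2c, hH]
      have hs : 2*P + U ≤ 0 := by rw [hH] at h2c; linarith
      have C1 : 0 ≤ (L*t)*((3 - L^2*t^2)*(-(2*P+U))) :=
        mul_nonneg (by positivity) (mul_nonneg (by linarith) (by linarith))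
      have C2 : 0 ≤ (L*t - 1)*(L^2*t^2*D - U) :=
        mul_nonneg (by linarith) (by linarith)
      have hgoalL : L * ((-L ^ 2 * t ^ 3 + 4 * t) * (D + 2 * P + U)) ≤ L * (4*(f x - f y)) := by
        linarith [K, C1, C2]
      exact le_of_mul_le_mul_left hgoalL hL
    · rw [min_eq_left h2c]
      have hs : 0 ≤ 2*P + U := by rw [hH] at h2c; linarith
      have D1 : 0 ≤ (L*t)*(2*P+U) := mul_nonneg (by positivity) hs
      have D2 : 0 ≤ (L*t - 1)*(L^2*t^2*D - U) :=
        mul_nonneg (by linarith) (by linarith)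
      have hgoalL : L * ((-L ^ 2 * t ^ 3 + 4 * t) * D) ≤ L * (4*(f x - f y)) := by
        linarith [K, D1, D2]
      exact le_of_mul_le_mul_left hgoalL hL


theorem gd_telescope (G : ℕ → ℝ) (N : ℕ) :
    ∑ k ∈ Finset.Icc 1 N, (G k - G (k+1)) = G 1 - G (N+1) := by
  have h0 : Finset.Icc 1 N = Finset.Ico 1 (N+1) := by rw [Finset.Ico_add_one_right_eq_Icc]
  rw [h0, Finset.sum_Ico_eq_sum_range]
  have h2 := Finset.sum_range_sub' (fun i => G (1+i)) N
  simp only [Nat.add_sub_cancel]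
  simpa [add_assoc, add_comm] using h2


theorem gd_fstar (f : EuclideanSpace ℝ (Fin n) → ℝ) (L : ℝ) (hL : 0 < L)
    (hf : Differentiable ℝ f)
    (hlip : ∀ x y, ‖gradient f x - gradient f y‖ ≤ L * ‖x - y‖)
    (fstar : ℝ) (hlow : ∀ y, fstar ≤ f y) (z : EuclideanSpace ℝ (Fin n)) :
    ‖gradient f z‖ ^ 2 ≤ 2 * L * (f z - fstar) := by
  have h1 := gd_taylor_upper f L hL hf hlip z ((-(1/L)) • gradient f z)
  have e1 : ⟪gradient f z, (-(1/L)) • gradient f z⟫ = -(1/L) * ‖gradient f z‖^2 := by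
    rw [real_inner_smul_right, real_inner_self_eq_norm_sq]
  have e2 : ‖(-(1/L)) • gradient f z‖^2 = (1/L)^2 * ‖gradient f z‖^2 := by
    rw [norm_smul, mul_pow, Real.norm_eq_abs, sq_abs]
    ring_nf
  have h2 := hlow (z + (-(1/L)) • gradient f z)
  rw [e1, e2] at h1
  set c := ‖gradient f z‖^2 with hc
  have h5 : L*((1/L)*c - L/2*((1/L)^2*c)) ≤ L*(f z - fstar) :=
    mul_le_mul_of_nonneg_left (by linarith) hL.le
  have h6 : L*((1/L)*c - L/2*((1/L)^2*c)) = c/2 := by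
    field_simp
    ring
  linarith

theorem stmt_7 {n : ℕ} (f : EuclideanSpace ℝ (Fin n) → ℝ) (L : ℝ) (hL : 0 < L)
    (hf : Differentiable ℝ f)
    (hlip : ∀ x y, ‖gradient f x - gradient f y‖ ≤ L * ‖x - y‖)
    (fstar : ℝ) (hlow : ∀ y, fstar ≤ f y)
    (Δ : ℝ) (hΔ : 0 < Δ) (N : ℕ) (hN : 1 ≤ N)
    (t : ℕ → ℝ) (ht : ∀ k, 1 ≤ k → k ≤ N → t k ∈ Set.Ioo 0 (Real.sqrt 3 / L))
    (x : ℕ → EuclideanSpace ℝ (Fin n))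
    (hinit : f (x 1) - fstar ≤ Δ)
    (hupd : ∀ k, 1 ≤ k → k ≤ N → x (k + 1) = x k - t k • gradient f (x k)) :
    ∃ k ∈ Finset.Icc 1 (N + 1),
      ‖gradient f (x k)‖ ≤
        Real.sqrt (4 * Δ /
          (∑ k ∈ Finset.Icc 1 N,
              min (-L ^ 2 * t k ^ 3 + 4 * t k) (-L * t k ^ 2 + 4 * t k) + 2 / L)) := by
  obtain ⟨k₀, hk₀mem, hk₀min⟩ := Finset.exists_min_image (Finset.Icc 1 (N+1))
    (fun k => ‖gradient f (x k)‖) ⟨1, by simp⟩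
  refine ⟨k₀, hk₀mem, ?_⟩
  set M := ‖gradient f (x k₀)‖ with hM
  have hMnn : 0 ≤ M := norm_nonneg _
  set S := ∑ k ∈ Finset.Icc 1 N,
      min (-L ^ 2 * t k ^ 3 + 4 * t k) (-L * t k ^ 2 + 4 * t k) with hS
  have hcnn : ∀ k ∈ Finset.Icc 1 N,
      0 ≤ min (-L ^ 2 * t k ^ 3 + 4 * t k) (-L * t k ^ 2 + 4 * t k) := by
    intro k hk
    rw [Finset.mem_Icc] at hk
    obtain ⟨ht0, ht1⟩ := ht k hk.1 hk.2
    have h1 : t k * L < Real.sqrt 3 := (lt_div_iff₀ hL).mp ht1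
    have h2 : Real.sqrt 3 ^ 2 = 3 := Real.sq_sqrt (by norm_num)
    have h3 : 0 < t k * L := by positivity
    have hp : 0 < Real.sqrt 3 + t k * L := by positivity
    have ht3 : L ^ 2 * t k ^ 2 ≤ 3 := by nlinarith [mul_pos (sub_pos.2 h1) hp, h2]
    have hlt2 : L * t k ≤ 2 := by nlinarith
    refine le_min (by nlinarith) (by nlinarith)
  have hbound : ∀ k ∈ Finset.Icc 1 N,
      min (-L ^ 2 * t k ^ 3 + 4 * t k) (-L * t k ^ 2 + 4 * t k) * M ^ 2
        ≤ 4 * (f (x k) - f (x (k+1))) := by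
    intro k hk
    have hcnn' := hcnn k hk
    rw [Finset.mem_Icc] at hk
    obtain ⟨ht0, ht1⟩ := ht k hk.1 hk.2
    have h1 : t k * L < Real.sqrt 3 := (lt_div_iff₀ hL).mp ht1
    have h2 : Real.sqrt 3 ^ 2 = 3 := Real.sq_sqrt (by norm_num)
    have hp : 0 < Real.sqrt 3 + t k * L := by positivity
    have ht3 : L ^ 2 * t k ^ 2 ≤ 3 := by nlinarith [mul_pos (sub_pos.2 h1) hp, h2]
    have hstep := gd_step f L hL hf hlip (x k) (t k) ht0 ht3
    rw [← hupd k hk.1 hk.2] at hstep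
    have hm1 : M ≤ ‖gradient f (x k)‖ := hk₀min k (by rw [Finset.mem_Icc]; omega)
    have hm2 : M ≤ ‖gradient f (x (k+1))‖ := hk₀min (k+1) (by rw [Finset.mem_Icc]; omega)
    have hM2 : M ^ 2 ≤ min (‖gradient f (x k)‖ ^ 2) (‖gradient f (x (k+1))‖ ^ 2) :=
      le_min (by nlinarith) (by nlinarith)
    calc min (-L ^ 2 * t k ^ 3 + 4 * t k) (-L * t k ^ 2 + 4 * t k) * M ^ 2
        ≤ min (-L ^ 2 * t k ^ 3 + 4 * t k) (-L * t k ^ 2 + 4 * t k) *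
            min (‖gradient f (x k)‖ ^ 2) (‖gradient f (x (k+1))‖ ^ 2) :=
          mul_le_mul_of_nonneg_left hM2 hcnn'
      _ ≤ 4 * (f (x k) - f (x (k+1))) := hstep
  have hsum : S * M ^ 2 ≤ 4 * (f (x 1) - f (x (N+1))) := by
    have h1 := Finset.sum_le_sum hbound
    rw [← Finset.sum_mul] at h1
    have h2 := gd_telescope (fun k => f (x k)) N
    calc S * M ^ 2 ≤ ∑ k ∈ Finset.Icc 1 N, 4 * (f (x k) - f (x (k+1))) := h1
      _ = 4 * ∑ k ∈ Finset.Icc 1 N, (f (x k) - f (x (k+1))) := by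
          rw [Finset.mul_sum]
      _ = 4 * (f (x 1) - f (x (N+1))) := by rw [h2]
  have hlast : M ^ 2 ≤ 2 * L * (f (x (N+1)) - fstar) := by
    have hfs := gd_fstar f L hL hf hlip fstar hlow (x (N+1))
    have hm := hk₀min (N+1) (by rw [Finset.mem_Icc]; omega)
    nlinarith [norm_nonneg (gradient f (x (N+1)))]
  have hSnn : 0 ≤ S := Finset.sum_nonneg hcnn
  have hden : 0 < S + 2 / L := by positivity
  have hq : M ^ 2 * (2 / L) ≤ 4 * (f (x (N+1)) - fstar) := by
    have h3 : (2/L) * M ^ 2 ≤ (2/L) * (2 * L * (f (x (N+1)) - fstar)) :=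
      mul_le_mul_of_nonneg_left hlast (by positivity)
    have h4 : (2/L) * (2 * L * (f (x (N+1)) - fstar)) = 4 * (f (x (N+1)) - fstar) := by
      field_simp
      ring
    linarith
  have hfinal : M ^ 2 * (S + 2 / L) ≤ 4 * Δ := by nlinarith [hsum, hq, hinit]
  have hM2le : M ^ 2 ≤ 4 * Δ / (S + 2 / L) := by
    rw [le_div_iff₀ hden]
    linarith
  calc M = Real.sqrt (M ^ 2) := (Real.sqrt_sq hMnn).symm
    _ ≤ Real.sqrt (4 * Δ / (S + 2 / L)) := Real.sqrt_le_sqrt hM2le
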